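/- Let B and C be subsets of S² with the property of Baire such that B ∩ C is meager, and suppose there is an isometry σ of S² such that σ(B ∪ C) \ B is meager (i.e., B ∪ C is quasi-congruent to a subset of B). Then C is meager. -/

import Mathlib

/-- A set has the property of Baire iff its symmetric difference with some open set is meager. -/
def HasBaireProperty {X : Type*} [TopologicalSpace X] (A : Set X) : Prop :=
  ∃ U : Set X, IsOpen U ∧ IsMeagre (symmDiff A U)
noncomputable section

/-- Euclidean 3-space. -/
abbrev E3 := EuclideanSpace ℝ (Fin 3)

/-- The unit sphere `S²` in `ℝ³`. -/
def S2 : Set E3 := Metric.sphere 0 1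

/-- The self-map of `S²` obtained by restricting a linear isometry equivalence of `ℝ³`
(an element of O(3)); such restrictions are exactly the isometries of `S²`. -/
def sphereMap (f : E3 ≃ₗᵢ[ℝ] E3) (x : S2) : S2 :=
  ⟨f x.1, by
    have hx : ‖(x : E3)‖ = 1 := by simpa [S2, mem_sphere_zero_iff_norm] using x.2
    simp [S2, mem_sphere_zero_iff_norm, f.norm_map, hx]⟩

/-- An element of O(3) is a rotation iff it has determinant 1 (i.e. lies in SO(3)). -/
def IsRotation (f : E3 ≃ₗᵢ[ℝ] E3) : Prop :=
  LinearMap.det (f.toLinearEquiv : E3 →ₗ[ℝ] E3) = 1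

end
open Set

instance : CompactSpace S2 := Metric.sphere.compactSpace _ _

lemma isMeagre_union {X : Type*} [TopologicalSpace X] {s t : Set X}
    (hs : IsMeagre s) (ht : IsMeagre t) : IsMeagre (s ∪ t) := by
  rw [IsMeagre, Set.compl_union]; exact Filter.inter_mem hs ht

lemma isOpen_eq_empty_of_isMeagre {X : Type*} [TopologicalSpace X] [BaireSpace X]
    {W : Set X} (hW : IsOpen W) (hm : IsMeagre W) : W = ∅ := by
  have hd : Dense Wᶜ := dense_of_mem_residual hm
  have := interior_eq_empty_iff_dense_compl.2 hd
  rwa [hW.interior_eq] at this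

/-- **Proposition 3.1.** If `B` and `C` are quasi-disjoint subsets of `S²` with the property of
Baire and some isometry `σ` of `S²` maps `B ∪ C` into `B` modulo a meager set, then `C` is
meager. -/
theorem stmt_5 (B C : Set S2)
    (hB : HasBaireProperty B) (hC : HasBaireProperty C)
    (hqd : IsMeagre (B ∩ C))
    (hsub : ∃ σ : E3 ≃ₗᵢ[ℝ] E3, IsMeagre (sphereMap σ '' (B ∪ C) \ B)) :
    IsMeagre C := by
  classical
  obtain ⟨σ, hM0⟩ := hsub
  set f : S2 → S2 := sphereMap σ with hf
  set g : S2 → S2 := sphereMap σ.symm with hg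
  have hgf : ∀ x, g (f x) = x := by
    intro x; apply Subtype.ext; simp [hf, hg, sphereMap]
  have hfg : ∀ x, f (g x) = x := by
    intro x; apply Subtype.ext; simp [hf, hg, sphereMap]
  have hfiso : Isometry f := by
    apply Isometry.of_dist_eq
    intro a b
    simp only [Subtype.dist_eq, hf, sphereMap]
    exact σ.dist_map _ _
  have hgiso : Isometry g := by
    apply Isometry.of_dist_eq
    intro a b
    simp only [Subtype.dist_eq, hg, sphereMap]
    exact σ.symm.dist_map _ _
  have hfinj : Function.Injective f := by
    intro a b h; have := congrArg g h; simpa [hgf] using this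
  have hopenf : IsOpenMap f := IsOpenMap.of_inverse hgiso.continuous hfg hgf
  have hopeng : IsOpenMap g := IsOpenMap.of_inverse hfiso.continuous hgf hfg
  have hfnIso : ∀ n : ℕ, Isometry (f^[n]) := by
    intro n
    induction n with
    | zero => simpa using isometry_id
    | succ n ih => rw [Function.iterate_succ]; exact ih.comp hfiso
  have hfnInj : ∀ n : ℕ, Function.Injective (f^[n]) := fun n => hfinj.iterate n
  have hfnOpen : ∀ n : ℕ, IsOpenMap (f^[n]) := by
    intro n
    induction n with
    | zero => simpa using IsOpenMap.id
    | succ n ih => rw [Function.iterate_succ]; exact ih.comp hopenf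
  -- image of a meager set under f (or its iterates) is meager
  have himg : ∀ s : Set S2, f '' s = g ⁻¹' s := by
    intro s
    ext x
    constructor
    · rintro ⟨a, ha, rfl⟩; simpa [hgf] using ha
    · intro hx; exact ⟨g x, hx, hfg x⟩
  have hmeag : ∀ {s : Set S2}, IsMeagre s → IsMeagre (f '' s) := by
    intro s hs
    rw [himg]
    exact hs.preimage_of_isOpenMap hgiso.continuous hopeng
  have hmeagIt : ∀ (n : ℕ) {s : Set S2}, IsMeagre s → IsMeagre (f^[n] '' s) := by
    intro n
    induction n with
    | zero => intro s hs; simpa using hs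
    | succ n ih =>
        intro s hs
        rw [Function.iterate_succ', Set.image_comp]
        exact hmeag (ih hs)
  -- one-step expansion of an iterated image, modulo B
  have step : ∀ (n : ℕ) (s : Set S2),
      f^[n+1] '' s \ B ⊆ (f^[n] '' B \ B) ∪ f^[n] '' (f '' s \ B) := by
    rintro n s x ⟨hx1, hx2⟩
    rw [Function.iterate_succ, Set.image_comp] at hx1
    obtain ⟨y, hy, rfl⟩ := hx1
    by_cases hyB : y ∈ B
    · exact Or.inl ⟨⟨y, hyB, rfl⟩, hx2⟩
    · exact Or.inr ⟨y, ⟨hy, hyB⟩, rfl⟩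
  have hBsub : IsMeagre (f '' B \ B) :=
    hM0.mono (Set.diff_subset_diff_left (Set.image_mono Set.subset_union_left))
  have hBn : ∀ n : ℕ, IsMeagre (f^[n] '' B \ B) := by
    intro n
    induction n with
    | zero => simpa using (IsMeagre.empty : IsMeagre (∅ : Set S2))
    | succ n ih =>
        exact (isMeagre_union ih (hmeagIt n hBsub)).mono (step n B)
  have hAn : ∀ n : ℕ, IsMeagre (f^[n+1] '' (B ∪ C) \ B) := by
    intro n
    exact (isMeagre_union (hBn n) (hmeagIt n hM0)).mono (step n (B ∪ C))
  have hCn : ∀ n : ℕ, IsMeagre (f^[n+1] '' C \ B) := by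
    intro n
    exact (hAn n).mono (Set.diff_subset_diff_left
      (Set.image_mono Set.subset_union_right))
  -- pairwise quasi-disjointness of the iterated images of C
  have hpair0 : ∀ k : ℕ, IsMeagre (C ∩ f^[k+1] '' C) := by
    intro k
    have hsub2 : C ∩ f^[k+1] '' C ⊆ (B ∩ C) ∪ (f^[k+1] '' C \ B) := by
      rintro x ⟨hx1, hx2⟩
      by_cases hxB : x ∈ B
      · exact Or.inl ⟨hxB, hx1⟩
      · exact Or.inr ⟨hx2, hxB⟩
    exact (isMeagre_union hqd (hCn k)).mono hsub2
  have hpair : ∀ n m : ℕ, n < m → IsMeagre (f^[n] '' C ∩ f^[m] '' C) := by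
    intro n m hnm
    obtain ⟨k, rfl⟩ : ∃ k : ℕ, m = n + (k + 1) :=
      ⟨m - n - 1, by omega⟩
    have heq : f^[n] '' C ∩ f^[n + (k+1)] '' C = f^[n] '' (C ∩ f^[k+1] '' C) := by
      rw [Set.image_inter (hfnInj n), Function.iterate_add, Set.image_comp]
    rw [heq]
    exact hmeagIt n (hpair0 k)
  -- use the Baire property of C
  obtain ⟨U, hUopen, hUm⟩ := hC
  by_contra hCnm
  have hUC : IsMeagre (U \ C) := hUm.mono (by rw [symmDiff_def]; exact Set.subset_union_right)
  have hCU : IsMeagre (C \ U) := hUm.mono (by rw [symmDiff_def]; exact Set.subset_union_left)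
  have hUnm : ¬ IsMeagre U := by
    intro hU
    exact hCnm ((isMeagre_union hU hCU).mono (fun x hx => by
      by_cases hxU : x ∈ U
      · exact Or.inl hxU
      · exact Or.inr ⟨hx, hxU⟩))
  have hUne : U.Nonempty := by
    rcases Set.eq_empty_or_nonempty U with h | h
    · exact absurd (h ▸ IsMeagre.empty) hUnm
    · exact h
  -- the open sets fⁿ(U) are pairwise disjoint
  have hVCm : ∀ n : ℕ, IsMeagre (f^[n] '' U \ f^[n] '' C) := by
    intro n
    rw [← Set.image_diff (hfnInj n)]
    exact hmeagIt n hUC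
  have hdisjU : ∀ n m : ℕ, n < m → f^[n] '' U ∩ f^[m] '' U = ∅ := by
    intro n m hnm
    apply isOpen_eq_empty_of_isMeagre ((hfnOpen n U hUopen).inter (hfnOpen m U hUopen))
    have hsub3 : f^[n] '' U ∩ f^[m] '' U ⊆
        (f^[n] '' C ∩ f^[m] '' C) ∪ ((f^[n] '' U \ f^[n] '' C) ∪ (f^[m] '' U \ f^[m] '' C)) := by
      rintro x ⟨hx1, hx2⟩
      by_cases h1 : x ∈ f^[n] '' C
      · by_cases h2 : x ∈ f^[m] '' C
        · exact Or.inl ⟨h1, h2⟩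
        · exact Or.inr (Or.inr ⟨hx2, h2⟩)
      · exact Or.inr (Or.inl ⟨hx1, h1⟩)
    exact (isMeagre_union (hpair n m hnm) (isMeagre_union (hVCm n) (hVCm m))).mono hsub3
  -- geometry: U contains a ball, whose iterated images are disjoint balls of fixed radius
  obtain ⟨x₀, hx₀⟩ := hUne
  obtain ⟨r, hr, hball⟩ := Metric.isOpen_iff.1 hUopen x₀ hx₀
  set p : ℕ → S2 := fun n => f^[n] x₀ with hp
  have hballn : ∀ n : ℕ, Metric.ball (p n) r ⊆ f^[n] '' U := by
    intro n y hy
    refine ⟨g^[n] y, ?_, ?_⟩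
    · apply hball
      have hfy : f^[n] (g^[n] y) = y := (Function.LeftInverse.iterate hfg n) y
      have : dist (g^[n] y) x₀ = dist y (p n) := by
        conv_rhs => rw [← hfy]
        rw [hp]
        exact ((hfnIso n).dist_eq _ _).symm
      rwa [Metric.mem_ball, this]
    · exact (Function.LeftInverse.iterate hfg n) y
  have hsep : ∀ n m : ℕ, n ≠ m → r ≤ dist (p n) (p m) := by
    intro n m hnm
    by_contra hlt
    push_neg at hlt
    have h1 : p m ∈ f^[n] '' U := hballn n (by rwa [Metric.mem_ball, dist_comm])
    have h2 : p m ∈ f^[m] '' U := ⟨x₀, hx₀, rfl⟩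
    rcases Nat.lt_or_ge n m with h | h
    · exact Set.eq_empty_iff_forall_notMem.1 (hdisjU n m h) (p m) ⟨h1, h2⟩
    · have hmn : m < n := lt_of_le_of_ne h (Ne.symm hnm)
      exact Set.eq_empty_iff_forall_notMem.1 (hdisjU m n hmn) (p m) ⟨h2, h1⟩
  -- compactness contradiction
  obtain ⟨a, -, φ, hφ, hconv⟩ :=
    isCompact_univ.tendsto_subseq (fun n => Set.mem_univ (p n))
  rw [Metric.tendsto_atTop] at hconv
  obtain ⟨N, hN⟩ := hconv (r / 2) (by linarith)
  have h1 := hN N le_rfl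
  have h2 := hN (N + 1) (Nat.le_succ N)
  have hne : φ N ≠ φ (N + 1) := (hφ (Nat.lt_succ_self N)).ne
  have := hsep (φ N) (φ (N + 1)) hne
  have htri : dist (p (φ N)) (p (φ (N + 1))) ≤
      dist (p (φ N)) a + dist a (p (φ (N + 1))) := dist_triangle _ _ _
  rw [dist_comm a] at htri
  simp only [Function.comp_apply] at h1 h2
  linarith
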